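/- Let V and W be finite-dimensional real vector spaces, let P ⊆ V be a nonempty polytope with affineSpan ℝ P = ⊤, and let Q ⊆ W be a nonempty polytope with affineSpan ℝ Q = ⊤. Then the affine span of the hom-polytope Hom(P,Q) = {f : V →ᵃ[ℝ] W | f '' P ⊆ Q} is the entire vector space of affine maps V →ᵃ[ℝ] W; in particular, dim Hom(P,Q) = (dim V)·(dim W) + dim W = dim P · dim Q + dim Q. -/

import Mathlib

set_option maxHeartbeats 1000000

/-- A polytope: the convex hull of a finite set of points. -/
def IsPolytope {V : Type*} [AddCommGroup V] [Module ℝ V] (P : Set V) : Prop :=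
  ∃ F : Finset V, P = convexHull ℝ (F : Set V)

/-- A point in the convex hull of a finite spanning set which is in the algebraic interior. -/
lemma exists_interior_point {W : Type*} [AddCommGroup W] [Module ℝ W]
    (G : Finset W) (hGne : G.Nonempty) (hGspan : affineSpan ℝ (G : Set W) = ⊤) :
    ∃ q₀ ∈ convexHull ℝ (G : Set W),
      ∀ w : W, ∃ ε : ℝ, 0 < ε ∧ q₀ + ε • w ∈ convexHull ℝ (G : Set W) := by
  classical
  obtain ⟨g₀, hg₀⟩ := hGne
  set n : ℝ := (G.card : ℝ) with hn
  have hncard : 0 < G.card := Finset.card_pos.2 ⟨g₀, hg₀⟩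
  have hnpos : (0:ℝ) < n := by rw [hn]; exact_mod_cast hncard
  refine ⟨∑ g ∈ G, (n⁻¹ : ℝ) • g, ?_, ?_⟩
  · have := G.centerMass_mem_convexHull (w := fun _ => (n⁻¹ : ℝ)) (z := id)
      (fun i _ => by positivity) (by
        rw [Finset.sum_const, nsmul_eq_mul]
        positivity) (fun i hi => hi)
    rwa [Finset.centerMass, Finset.sum_const, nsmul_eq_mul, mul_inv_cancel₀ (by positivity),
      inv_one, one_smul] at this
  · intro w
    -- express w as a combination of g - g₀
    have hw : w ∈ Submodule.span ℝ ((· -ᵥ g₀) '' (G : Set W)) := by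
      rw [← vectorSpan_eq_span_vsub_set_right ℝ (by exact_mod_cast hg₀)]
      have : vectorSpan ℝ (G : Set W) = ⊤ := by
        rw [← direction_affineSpan, hGspan, AffineSubspace.direction_top]
      rw [this]; trivial
    rw [Finsupp.mem_span_image_iff_linearCombination] at hw
    obtain ⟨l, hlsupp, hlw⟩ := hw
    have hsum : ∑ g ∈ G, l g • (g - g₀) = w := by
      rw [← hlw, Finsupp.linearCombination_apply, Finsupp.sum]
      refine (Finset.sum_subset ?_ ?_).symm
      · intro x hx
        exact_mod_cast (Finsupp.mem_supported ℝ l).1 hlsupp hx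
      · intro x _ hx'
        simp [Finsupp.notMem_support_iff.1 hx']
    set S : ℝ := ∑ g ∈ G, l g with hS
    set B : ℝ := (∑ g ∈ G, |l g|) + |S| + 1 with hB
    have hBpos : 0 < B := by
      have h0 : 0 ≤ ∑ g ∈ G, |l g| := Finset.sum_nonneg fun _ _ => abs_nonneg _
      have := abs_nonneg S
      linarith
    set ε : ℝ := 1 / (n * B) with hε
    have hεpos : 0 < ε := by positivity
    refine ⟨ε, hεpos, ?_⟩
    set μ : W → ℝ := fun g => n⁻¹ + ε * (l g - if g = g₀ then S else 0) with hμ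
    have hμsum : ∑ g ∈ G, μ g = 1 := by
      simp only [hμ]
      rw [Finset.sum_add_distrib, Finset.sum_const, nsmul_eq_mul, ← Finset.mul_sum,
        Finset.sum_sub_distrib, Finset.sum_ite_eq' G g₀ (fun _ => S), if_pos hg₀, ← hS,
        sub_self, mul_zero, add_zero, mul_inv_cancel₀ (ne_of_gt hnpos)]
    have hμnonneg : ∀ g ∈ G, 0 ≤ μ g := by
      intro g hg
      have h1 : |l g - if g = g₀ then S else 0| ≤ B := by
        have h2 : |l g| ≤ ∑ g' ∈ G, |l g'| :=
          Finset.single_le_sum (fun i _ => abs_nonneg (l i)) hg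
        have h3 : |if g = g₀ then S else 0| ≤ |S| := by split <;> simp [abs_nonneg]
        calc |l g - if g = g₀ then S else 0| ≤ |l g| + |if g = g₀ then S else 0| :=
              abs_sub _ _
          _ ≤ B := by rw [hB]; linarith
      have h4 : ε * |l g - if g = g₀ then S else 0| ≤ ε * B :=
        mul_le_mul_of_nonneg_left h1 (le_of_lt hεpos)
      have h5 : ε * B = n⁻¹ := by rw [hε]; field_simp
      have h6 : -(n⁻¹) ≤ ε * (l g - if g = g₀ then S else 0) := by
        have h8 := neg_abs_le (ε * (l g - if g = g₀ then S else 0))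
        rw [abs_mul, abs_of_pos hεpos] at h8
        have h7 : -(n⁻¹) ≤ -(ε * |l g - if g = g₀ then S else 0|) := by
          rw [← h5]; exact neg_le_neg h4
        exact le_trans h7 h8
      simp only [hμ]; linarith
    have hw2 : w = (∑ g ∈ G, l g • g) - S • g₀ := by
      rw [← hsum]
      simp [smul_sub, Finset.sum_sub_distrib, ← Finset.sum_smul]
      rfl
    have hiteg : ∑ g ∈ G, (if g = g₀ then S else 0 : ℝ) • g = S • g₀ := by
      have : ∀ g : W, (if g = g₀ then S else 0 : ℝ) • g
          = if g = g₀ then S • g else 0 := by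
        intro g; split <;> simp
      simp_rw [this]
      rw [Finset.sum_ite_eq' G g₀ (fun g => S • g), if_pos hg₀]
    have hval : ∑ g ∈ G, μ g • g = (∑ g ∈ G, (n⁻¹ : ℝ) • g) + ε • w := by
      simp only [hμ, add_smul, mul_smul, sub_smul]
      rw [Finset.sum_add_distrib]
      congr 1
      rw [← Finset.smul_sum]
      congr 1
      rw [Finset.sum_sub_distrib, hiteg, ← hw2]
    have hmem := G.centerMass_mem_convexHull hμnonneg
      (by rw [hμsum]; exact one_pos) (fun i hi => hi) (z := id)
    rw [Finset.centerMass_eq_of_sum_1 _ _ hμsum] at hmem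
    simpa [hval] using hmem

theorem stmt_7 {V W : Type*}
    [AddCommGroup V] [Module ℝ V] [FiniteDimensional ℝ V]
    [AddCommGroup W] [Module ℝ W] [FiniteDimensional ℝ W]
    (P : Set V) (Q : Set W)
    (hP : IsPolytope P) (hPne : P.Nonempty) (hPspan : affineSpan ℝ P = ⊤)
    (hQ : IsPolytope Q) (hQne : Q.Nonempty) (hQspan : affineSpan ℝ Q = ⊤) :
    affineSpan ℝ {f : V →ᵃ[ℝ] W | f '' P ⊆ Q} = ⊤ ∧
    Module.finrank ℝ (V →ᵃ[ℝ] W) =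
      Module.finrank ℝ V * Module.finrank ℝ W + Module.finrank ℝ W := by
  obtain ⟨F, hF⟩ := hP
  obtain ⟨G, hG⟩ := hQ
  have hFne : F.Nonempty := by
    by_contra h
    rw [Finset.not_nonempty_iff_eq_empty] at h
    simp [hF, h] at hPne
  have hGne : G.Nonempty := by
    by_contra h
    rw [Finset.not_nonempty_iff_eq_empty] at h
    simp [hG, h] at hQne
  have hGspan : affineSpan ℝ (G : Set W) = ⊤ := by
    rw [← hQspan, hG, affineSpan_convexHull]
  obtain ⟨q₀, hq₀, hkey⟩ := exists_interior_point G hGne hGspan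
  rw [← hG] at hq₀ hkey
  have hQconv : Convex ℝ Q := hG ▸ convex_convexHull ℝ _
  constructor
  · rw [eq_top_iff]
    intro f _
    set c : V →ᵃ[ℝ] W := AffineMap.const ℝ V q₀ with hc
    have hcS : c ∈ {f : V →ᵃ[ℝ] W | f '' P ⊆ Q} := by
      intro y hy
      obtain ⟨x, _, rfl⟩ := hy
      exact hq₀
    choose e he₁ he₂ using hkey
    set t : ℝ := F.inf' hFne (fun p => e (f p - q₀)) with ht
    have htpos : 0 < t := by
      rw [ht, Finset.lt_inf'_iff]
      exact fun p _ => he₁ _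
    set g : V →ᵃ[ℝ] W := t • (f - c) + c with hg
    have hgval : ∀ p : V, g p = q₀ + t • (f p - q₀) := by
      intro p
      simp [hg, hc, add_comm]
    have hgS : g ∈ {f : V →ᵃ[ℝ] W | f '' P ⊆ Q} := by
      show ⇑g '' P ⊆ Q
      rw [hF, AffineMap.image_convexHull]
      refine convexHull_min ?_ hQconv
      rintro z ⟨p, hp, rfl⟩
      rw [hgval p]
      -- q₀ + t • (f p - q₀) lies on segment from q₀ to q₀ + e • (f p - q₀)
      set ep := e (f p - q₀) with hep
      have hte : t ≤ ep := Finset.inf'_le _ hp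
      have heppos : 0 < ep := he₁ _
      have hmem := he₂ (f p - q₀)
      have : q₀ + t • (f p - q₀)
          = (1 - t / ep) • q₀ + (t / ep) • (q₀ + ep • (f p - q₀)) := by
        rw [smul_add, ← add_assoc, ← add_smul, sub_add_cancel, one_smul, smul_smul,
          div_mul_cancel₀ _ (ne_of_gt heppos)]
      rw [this]
      exact hQconv hq₀ hmem
        (by rw [sub_nonneg]; exact (div_le_one heppos).2 hte)
        (by positivity) (by ring)
    have hfeq : f = t⁻¹ • (g -ᵥ c) +ᵥ c := by
      simp only [hg, vsub_eq_sub, vadd_eq_add, add_sub_cancel_right, smul_smul,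
        inv_mul_cancel₀ (ne_of_gt htpos), one_smul]
      abel
    rw [hfeq]
    exact (affineSpan ℝ _).smul_vsub_vadd_mem t⁻¹
      (subset_affineSpan ℝ _ hgS) (subset_affineSpan ℝ _ hcS) (subset_affineSpan ℝ _ hcS)
  · have e := AffineMap.toConstProdLinearMap (k := ℝ) (V1 := V) (V2 := W) ℝ
    rw [e.finrank_eq, Module.finrank_prod, Module.finrank_linearMap, add_comm]
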